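/- arXiv:1608.08247 — 3 statements merged into one kernel-verified Lean document; each statement's English description precedes it below -/
import Mathlib

section
/- Let (Ω, F, P) be a probability space and let A₁, …, Aₙ be events (measurable sets) with n ≥ 2. Then P(A₁ ∪ A₂ ∪ … ∪ Aₙ) ≤ P(A₁) + P(A₂) + … + P(Aₙ) − P(A₁ ∩ A₂ ∩ … ∩ Aₙ). -/
open MeasureTheory

/-- Inequality (3) of the paper: a first tightening of Boole's inequality obtained by
subtracting the probability of the intersection of all events once. -/
theorem improved_boole_subtract_once {Ω : Type*} [MeasurableSpace Ω]
    (P : Measure Ω) [IsProbabilityMeasure P]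
    (n : ℕ) (hn : 2 ≤ n) (A : Fin n → Set Ω) (hA : ∀ i, MeasurableSet (A i)) :
    (P (⋃ i, A i)).toReal ≤ ∑ i, (P (A i)).toReal - (P (⋂ i, A i)).toReal := by
  set i0 : Fin n := ⟨0, by omega⟩
  set i1 : Fin n := ⟨1, by omega⟩
  have hne : i0 ≠ i1 := by simp [i0, i1, Fin.ext_iff]
  set s : Finset (Fin n) := (Finset.univ.erase i0).erase i1 with hs
  have key : P (⋃ i, A i) + P (⋂ i, A i) ≤ ∑ i, P (A i) := by
    have h1 : P (⋃ i, A i) ≤ P (A i0 ∪ A i1) + ∑ i ∈ s, P (A i) := by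
      have hsub : (⋃ i, A i) ⊆ (A i0 ∪ A i1) ∪ ⋃ i ∈ s, A i := by
        intro x hx
        obtain ⟨i, hi⟩ := Set.mem_iUnion.1 hx
        by_cases h0 : i = i0
        · exact Or.inl (Or.inl (h0 ▸ hi))
        by_cases h1 : i = i1
        · exact Or.inl (Or.inr (h1 ▸ hi))
        · exact Or.inr (Set.mem_biUnion (Finset.mem_erase.2 ⟨h1, Finset.mem_erase.2 ⟨h0, Finset.mem_univ i⟩⟩) hi)
      calc P (⋃ i, A i) ≤ P ((A i0 ∪ A i1) ∪ ⋃ i ∈ s, A i) := measure_mono hsub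
        _ ≤ P (A i0 ∪ A i1) + P (⋃ i ∈ s, A i) := measure_union_le _ _
        _ ≤ P (A i0 ∪ A i1) + ∑ i ∈ s, P (A i) := by
            gcongr
            exact measure_biUnion_finset_le s A
    have h2 : P (⋂ i, A i) ≤ P (A i0 ∩ A i1) := by
      refine measure_mono (fun x hx => ⟨?_, ?_⟩) <;> exact Set.mem_iInter.1 hx _
    have hsum : ∑ i, P (A i) = (P (A i0) + P (A i1)) + ∑ i ∈ s, P (A i) := by
      rw [← Finset.add_sum_erase _ _ (Finset.mem_univ i0),
        ← Finset.add_sum_erase _ _ (Finset.mem_erase.2 ⟨hne.symm, Finset.mem_univ i1⟩)]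
      ring
    calc P (⋃ i, A i) + P (⋂ i, A i)
        ≤ (P (A i0 ∪ A i1) + ∑ i ∈ s, P (A i)) + P (A i0 ∩ A i1) := add_le_add h1 h2
      _ = (P (A i0 ∪ A i1) + P (A i0 ∩ A i1)) + ∑ i ∈ s, P (A i) := by ring
      _ = (P (A i0) + P (A i1)) + ∑ i ∈ s, P (A i) := by
          rw [measure_union_add_inter _ (hA i1)]
      _ = ∑ i, P (A i) := hsum.symm
  have hS : (∑ i, P (A i)) ≠ ⊤ := by
    refine (lt_of_le_of_lt (Finset.sum_le_sum fun i _ => prob_le_one) ?_).ne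
    simp
  have hUnion : P (⋃ i, A i) ≠ ⊤ := measure_ne_top _ _
  have hInter : P (⋂ i, A i) ≠ ⊤ := measure_ne_top _ _
  have h3 : (P (⋃ i, A i)).toReal + (P (⋂ i, A i)).toReal ≤ (∑ i, P (A i)).toReal := by
    rw [← ENNReal.toReal_add hUnion hInter]
    exact ENNReal.toReal_mono hS key
  rw [ENNReal.toReal_sum (fun i _ => measure_ne_top _ _)] at h3
  linarith
end

section
/- Let (Ω, F, P) be a probability space and let A₁, …, Aₙ be events (measurable sets) with n ≥ 2. Then P(A₁ ∪ A₂ ∪ … ∪ Aₙ) ≤ P(A₁) + P(A₂) + … + P(Aₙ) − (n − 1) · P(A₁ ∩ A₂ ∩ … ∩ Aₙ). -/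
open MeasureTheory

/-- Inequality (4) of the paper (the "improved Boole's inequality", Proposition 1):
`P(⋃ i, A i) ≤ ∑ i, P(A i) - (n - 1) * P(⋂ i, A i)`. -/
theorem improved_boole {Ω : Type*} [MeasurableSpace Ω]
    (P : Measure Ω) [IsProbabilityMeasure P]
    (n : ℕ) (hn : 2 ≤ n) (A : Fin n → Set Ω) (hA : ∀ i, MeasurableSet (A i)) :
    (P (⋃ i, A i)).toReal ≤
      ∑ i, (P (A i)).toReal - ((n : ℝ) - 1) * (P (⋂ i, A i)).toReal := by
  set I := ⋂ i, A i with hIdef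
  have hI : MeasurableSet I := MeasurableSet.iInter fun i => hA i
  have hIsub : ∀ i, I ⊆ A i := fun i => Set.iInter_subset A i
  have hne : ∀ s : Set Ω, P s ≠ ⊤ := fun s => measure_ne_top P s
  have hsplit : ∀ i, P (A i) = P I + P (A i \ I) := by
    intro i
    have h := measure_inter_add_diff (μ := P) (A i) hI
    rw [Set.inter_eq_self_of_subset_right (hIsub i)] at h
    exact h.symm
  have hcover : P (⋃ i, A i) ≤ ∑ i, P (A i \ I) + P I := by
    have hsub : (⋃ i, A i) ⊆ (⋃ i, A i \ I) ∪ I := by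
      intro x hx
      rcases Set.mem_iUnion.1 hx with ⟨i, hi⟩
      by_cases hxI : x ∈ I
      · exact Or.inr hxI
      · exact Or.inl (Set.mem_iUnion.2 ⟨i, ⟨hi, hxI⟩⟩)
    calc P (⋃ i, A i) ≤ P ((⋃ i, A i \ I) ∪ I) := measure_mono hsub
      _ ≤ P (⋃ i, A i \ I) + P I := measure_union_le _ _
      _ ≤ ∑ i, P (A i \ I) + P I := add_le_add_left (measure_iUnion_fintype_le P _) _
  have key : (P (⋃ i, A i)).toReal ≤ ∑ i, (P (A i \ I)).toReal + (P I).toReal := by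
    have hrhs : (∑ i, P (A i \ I) + P I) ≠ ⊤ := by
      refine ENNReal.add_ne_top.2 ⟨?_, hne I⟩
      exact (ENNReal.sum_lt_top.2 fun i _ => (hne _).lt_top).ne
    have h := ENNReal.toReal_mono hrhs hcover
    rwa [ENNReal.toReal_add (by exact (ENNReal.sum_lt_top.2 fun i _ => (hne _).lt_top).ne)
      (hne I), ENNReal.toReal_sum (fun i _ => hne _)] at h
  have hsum : ∑ i, (P (A i)).toReal
      = (n : ℝ) * (P I).toReal + ∑ i, (P (A i \ I)).toReal := by
    have h1 : ∀ i, (P (A i)).toReal = (P I).toReal + (P (A i \ I)).toReal := fun i => by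
      rw [hsplit i, ENNReal.toReal_add (hne I) (hne _)]
    rw [Finset.sum_congr rfl (fun i _ => h1 i), Finset.sum_add_distrib,
        Finset.sum_const, Finset.card_univ, Fintype.card_fin, nsmul_eq_mul]
  rw [hsum]
  have hring : (n : ℝ) * (P I).toReal + ∑ i, (P (A i \ I)).toReal
      - ((n : ℝ) - 1) * (P I).toReal
      = ∑ i, (P (A i \ I)).toReal + (P I).toReal := by ring
  rw [hring]
  exact key
end

section
/- Let (Ω, F, P) be a probability space and let A₁, …, Aₙ be events (measurable sets) with n ≥ 2. Then P(A₁ ∪ A₂ ∪ … ∪ Aₙ) ≤ P(A₁) + P(A₂) + … + P(Aₙ) − (n − 1) · max(0, P(A₁) + P(A₂) + … + P(Aₙ) − (n − 1)). -/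
open MeasureTheory

/-- Inequality (5) of the paper: combining the improved Boole's inequality with
Fréchet's lower bound on `P(⋂ i, A i)`. -/
theorem improved_boole_frechet {Ω : Type*} [MeasurableSpace Ω]
    (P : Measure Ω) [IsProbabilityMeasure P]
    (n : ℕ) (hn : 2 ≤ n) (A : Fin n → Set Ω) (hA : ∀ i, MeasurableSet (A i)) :
    (P (⋃ i, A i)).toReal ≤
      ∑ i, (P (A i)).toReal -
        ((n : ℝ) - 1) * max 0 (∑ i, (P (A i)).toReal - ((n : ℝ) - 1)) := by
  set S : ℝ := ∑ i, (P (A i)).toReal with hS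
  set I : ℝ := (P (⋂ i, A i)).toReal with hI
  set U : ℝ := (P (⋃ i, A i)).toReal with hU
  have hInt : MeasurableSet (⋂ i, A i) := MeasurableSet.iInter (fun i => hA i)
  have hfin : ∀ s : Set Ω, P s ≠ ⊤ := fun s => measure_ne_top P s
  -- each measure decomposition
  have hdec : ∀ i, (P (A i)).toReal = I + (P (A i \ ⋂ j, A j)).toReal := by
    intro i
    have h1 : P (A i ∩ ⋂ j, A j) + P (A i \ ⋂ j, A j) = P (A i) :=
      measure_inter_add_diff (A i) hInt
    have h2 : A i ∩ ⋂ j, A j = ⋂ j, A j := by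
      apply Set.inter_eq_self_of_subset_right
      exact Set.iInter_subset A i
    rw [h2] at h1
    rw [← h1, ENNReal.toReal_add (hfin _) (hfin _)]
  -- improved Boole: U + (n-1) * I ≤ S
  have boole : U + ((n:ℝ) - 1) * I ≤ S := by
    have hsub : (⋃ i, A i) ⊆ (⋂ j, A j) ∪ ⋃ i, (A i \ ⋂ j, A j) := by
      intro x hx
      rcases Set.mem_iUnion.1 hx with ⟨i, hi⟩
      by_cases h : x ∈ ⋂ j, A j
      · exact Or.inl h
      · exact Or.inr (Set.mem_iUnion.2 ⟨i, hi, h⟩)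
    have hU1 : P (⋃ i, A i) ≤ P (⋂ j, A j) + ∑ i, P (A i \ ⋂ j, A j) := by
      calc P (⋃ i, A i) ≤ P ((⋂ j, A j) ∪ ⋃ i, (A i \ ⋂ j, A j)) := measure_mono hsub
        _ ≤ P (⋂ j, A j) + P (⋃ i, (A i \ ⋂ j, A j)) := measure_union_le _ _
        _ ≤ P (⋂ j, A j) + ∑ i, P (A i \ ⋂ j, A j) := by
              gcongr; exact measure_iUnion_fintype_le _ _
    have hU2 : U ≤ I + ∑ i, (P (A i \ ⋂ j, A j)).toReal := by
      have := ENNReal.toReal_mono (by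
        simp only [ne_eq]
        exact ENNReal.add_ne_top.2 ⟨hfin _, ENNReal.sum_ne_top.2 fun i _ => hfin _⟩) hU1
      rwa [ENNReal.toReal_add (hfin _) (ENNReal.sum_ne_top.2 fun i _ => hfin _),
        ENNReal.toReal_sum (fun i _ => hfin _)] at this
    have hSsum : S = (n:ℝ) * I + ∑ i, (P (A i \ ⋂ j, A j)).toReal := by
      rw [hS]
      rw [Finset.sum_congr rfl (fun i _ => hdec i), Finset.sum_add_distrib]
      simp [Finset.card_univ]
    nlinarith [hU2, hSsum]
  -- Fréchet: S - (n-1) ≤ I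
  have frechet : S - ((n:ℝ) - 1) ≤ I := by
    have hc : P (⋂ i, A i)ᶜ ≤ ∑ i, P (A i)ᶜ := by
      rw [Set.compl_iInter]
      exact measure_iUnion_fintype_le _ _
    have hcr : (P (⋂ i, A i)ᶜ).toReal ≤ ∑ i, (P (A i)ᶜ).toReal := by
      have := ENNReal.toReal_mono (ENNReal.sum_ne_top.2 fun i _ => hfin _) hc
      rwa [ENNReal.toReal_sum (fun i _ => hfin _)] at this
    have h1 : (P (⋂ i, A i)ᶜ).toReal = 1 - I := by
      rw [hI, ← ENNReal.toReal_one]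
      rw [prob_compl_eq_one_sub hInt]
      rw [ENNReal.toReal_sub_of_le prob_le_one (by simp)]
    have h2 : ∀ i, (P (A i)ᶜ).toReal = 1 - (P (A i)).toReal := by
      intro i
      rw [prob_compl_eq_one_sub (hA i),
        ENNReal.toReal_sub_of_le prob_le_one (by simp)]
      simp
    rw [h1, Finset.sum_congr rfl (fun i _ => h2 i), Finset.sum_sub_distrib] at hcr
    simp [Finset.card_univ, ← hS] at hcr
    linarith
  have hIpos : 0 ≤ I := ENNReal.toReal_nonneg
  have hn1 : (1:ℝ) ≤ (n:ℝ) := by exact_mod_cast Nat.one_le_of_lt hn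
  rcases le_or_gt (S - ((n:ℝ) - 1)) 0 with h | h
  · rw [max_eq_left h]
    nlinarith
  · rw [max_eq_right h.le]
    nlinarith [mul_le_mul_of_nonneg_left frechet (by linarith : (0:ℝ) ≤ (n:ℝ) - 1)]
end
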